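/- arXiv:2605.30286 — 3 statements merged into one kernel-verified Lean document; each statement's English description precedes it below -/
import Mathlib

section
/- Let T₁, T₂ be topological vector spaces, S ⊆ T₁ × T₂ convex, and y ∈ T₂ such that there exists x ∈ T₁ with (x, y) ∈ interior S. Then {x : (x,y) ∈ interior S} = interior {x : (x,y) ∈ S}, where the interior on the right is taken in T₁. -/
open Topology Filter


theorem slice_interior_eq_interior_slice {T₁ T₂ : Type*}
    [AddCommGroup T₁] [Module ℝ T₁] [TopologicalSpace T₁] [IsTopologicalAddGroup T₁]
    [ContinuousSMul ℝ T₁]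
    [AddCommGroup T₂] [Module ℝ T₂] [TopologicalSpace T₂] [IsTopologicalAddGroup T₂]
    [ContinuousSMul ℝ T₂]
    (S : Set (T₁ × T₂)) (hS : Convex ℝ S) (y : T₂)
    (hx : ∃ x : T₁, (x, y) ∈ interior S) :
    {x : T₁ | (x, y) ∈ interior S} = interior {x : T₁ | (x, y) ∈ S} := by
  obtain ⟨x₀, hx₀⟩ := hx
  apply Set.Subset.antisymm
  · exact interior_maximal (fun x hxm => (interior_subset hxm : (x, y) ∈ S))
      (isOpen_interior.preimage (Continuous.prodMk_left y))
  · intro x hxi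
    obtain ⟨t, ht0, htS⟩ : ∃ t : ℝ, 0 < t ∧ (x + t • (x - x₀), y) ∈ S := by
      have hc : ContinuousAt (fun t : ℝ => x + t • (x - x₀)) 0 := by fun_prop
      have h0 : x + (0:ℝ) • (x - x₀) ∈ interior {x : T₁ | (x, y) ∈ S} := by simpa using hxi
      have hev : ∀ᶠ t in 𝓝 (0:ℝ),
          (x + t • (x - x₀)) ∈ interior {x : T₁ | (x, y) ∈ S} :=
        hc.preimage_mem_nhds (isOpen_interior.mem_nhds h0)
      have hev' : ∀ᶠ t in 𝓝[>] (0:ℝ), (x + t • (x - x₀), y) ∈ S := by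
        filter_upwards [hev.filter_mono nhdsWithin_le_nhds] with t ht
        exact interior_subset (s := {x : T₁ | (x, y) ∈ S}) ht
      obtain ⟨t, htmem, htpos⟩ :=
        (hev'.and (eventually_mem_nhdsWithin (s := Set.Ioi (0:ℝ)))).exists
      exact ⟨t, htpos, htmem⟩
    have h1t : (0:ℝ) < 1 + t := by linarith
    have h1t' : (1 + t) ≠ 0 := ne_of_gt h1t
    have hcombo := hS.combo_interior_self_mem_interior hx₀ htS
      (show 0 < t / (1 + t) by positivity) (show (0:ℝ) ≤ 1 / (1 + t) by positivity)
      (by field_simp; ring)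
    have hxy : (t / (1 + t)) • ((x₀, y) : T₁ × T₂)
        + (1 / (1 + t)) • ((x + t • (x - x₀), y) : T₁ × T₂) = (x, y) := by
      refine Prod.ext ?_ ?_
      · show (t / (1 + t)) • x₀ + (1 / (1 + t)) • (x + t • (x - x₀)) = x
        match_scalars <;> (field_simp; try ring)
      · show (t / (1 + t)) • y + (1 / (1 + t)) • y = y
        match_scalars <;> (field_simp; try ring)
    rw [hxy] at hcombo
    exact hcombo
end

section
/- Let H be a convex cone in topological vector space Y, and suppose every Henig dilating cone of C contained in a fixed dilating cone 𝓗 is also a dilating cone. Then the set of Henig-properly efficient points of f on S w.r.t. C equals the union of Eff(f, S, H ∩ 𝓗) over all Henig dilating cones H of C, where 𝓗 is any fixed Henig dilating cone of C. -/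
/-- `H` is a Henig dilating cone of `C`. -/
def IsDilatingCone {Y : Type*} [AddCommGroup Y] [Module ℝ Y] [TopologicalSpace Y]
    (C H : Set Y) : Prop :=
  Convex ℝ H ∧ (∀ c ∈ H, ∀ t : ℝ, 0 ≤ t → t • c ∈ H) ∧ C \ {0} ⊆ interior H

lemma IsDilatingCone.inter {Y : Type*} [AddCommGroup Y] [Module ℝ Y] [TopologicalSpace Y]
    {C H K : Set Y} (hH : IsDilatingCone C H) (hK : IsDilatingCone C K) :
    IsDilatingCone C (H ∩ K) := by
  obtain ⟨hHc, hHm, hHi⟩ := hH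
  obtain ⟨hKc, hKm, hKi⟩ := hK
  refine ⟨hHc.inter hKc, fun c hc t ht => ⟨hHm c hc.1 t ht, hKm c hc.2 t ht⟩, ?_⟩
  rw [interior_inter]
  exact fun y hy => ⟨hHi hy, hKi hy⟩

theorem pEffHenig_eq_union_eff_inter {X Y : Type*}
    [AddCommGroup Y] [Module ℝ Y] [TopologicalSpace Y] [IsTopologicalAddGroup Y]
    [ContinuousSMul ℝ Y]
    (D S : Set X) (f : X → Y) (C 𝓗 : Set Y)
    (hSne : S.Nonempty) (hSD : S ⊆ D)
    (hCne : C ≠ {0}) (hC0 : (0 : Y) ∈ C) (hCconv : Convex ℝ C)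
    (hCcone : ∀ c ∈ C, ∀ t : ℝ, 0 ≤ t → t • c ∈ C)
    (hCpointed : C ∩ (-C) ⊆ {0})
    (h𝓗 : IsDilatingCone C 𝓗)
    (hsub : ∀ H : Set Y, IsDilatingCone C H → H ⊆ 𝓗 → IsDilatingCone C H) :
    {x | x ∈ S ∧ ∃ H : Set Y, IsDilatingCone C H ∧
        ∀ y ∈ S, f y - f x ∈ -H → f y - f x = 0} =
      ⋃ H ∈ {H : Set Y | IsDilatingCone C H},
        {x | x ∈ S ∧ ∀ y ∈ S, f y - f x ∈ -(H ∩ 𝓗) → f y - f x = 0} := by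
  ext x
  simp only [Set.mem_setOf_eq, Set.mem_iUnion]
  constructor
  · rintro ⟨hxS, H, hH, heff⟩
    exact ⟨H, hH, hxS, fun y hy hmem => heff y hy hmem.1⟩
  · rintro ⟨H, hH, hxS, heff⟩
    exact ⟨hxS, H ∩ 𝓗, hH.inter h𝓗, heff⟩
end

section
/- Let C ⊆ Y be a nontrivial pointed convex cone, H a convex cone with C \ {0} ⊆ interior H, and h ∈ interior H. Then H⊗_h := {(v,t) ∈ Y × ℝ : v + t•h ∈ H} is a Henig dilating cone of C × [0,∞) in Y × ℝ; i.e., H⊗_h is a convex cone and (C × [0,∞)) \ {(0,0)} ⊆ interior(H⊗_h). -/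
theorem extended_cone_is_dilating {Y : Type*}
    [AddCommGroup Y] [Module ℝ Y] [TopologicalSpace Y] [IsTopologicalAddGroup Y]
    [ContinuousSMul ℝ Y]
    (C H : Set Y)
    (hCne : C ≠ {0}) (hC0 : (0 : Y) ∈ C) (hCconv : Convex ℝ C)
    (hCcone : ∀ c ∈ C, ∀ t : ℝ, 0 ≤ t → t • c ∈ C)
    (hCpointed : C ∩ (-C) ⊆ {0})
    (hHconv : Convex ℝ H) (hHcone : ∀ c ∈ H, ∀ t : ℝ, 0 ≤ t → t • c ∈ H)
    (hHdil : C \ {0} ⊆ interior H) (h : Y) (hh : h ∈ interior H) :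
    Convex ℝ {p : Y × ℝ | p.1 + p.2 • h ∈ H} ∧
      (∀ p ∈ {p : Y × ℝ | p.1 + p.2 • h ∈ H}, ∀ t : ℝ, 0 ≤ t →
        t • p ∈ {p : Y × ℝ | p.1 + p.2 • h ∈ H}) ∧
      (C ×ˢ Set.Ici (0 : ℝ)) \ {(0, 0)} ⊆ interior {p : Y × ℝ | p.1 + p.2 • h ∈ H} := by
  -- H + H ⊆ H
  have hHadd : ∀ x ∈ H, ∀ y ∈ H, x + y ∈ H := by
    intro x hx y hy
    have := hHconv hx hy (by norm_num : (0:ℝ) ≤ 1/2) (by norm_num : (0:ℝ) ≤ 1/2)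
      (by norm_num)
    have h2 := hHcone _ this 2 (by norm_num)
    have : (2:ℝ) • ((1/2 : ℝ) • x + (1/2 : ℝ) • y) = x + y := by
      rw [smul_add, smul_smul, smul_smul]; norm_num
    rwa [this] at h2
  -- interior H + H ⊆ interior H
  have hIntAdd : ∀ x ∈ interior H, ∀ y ∈ H, x + y ∈ interior H := by
    intro x hx y hy
    have hopen : IsOpen ((· + y) '' interior H) :=
      (isOpenMap_add_right y) _ isOpen_interior
    have hsub : (· + y) '' interior H ⊆ H := by
      rintro _ ⟨z, hz, rfl⟩
      exact hHadd z (interior_subset hz) y hy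
    exact interior_maximal hsub hopen ⟨x, hx, rfl⟩
  -- t • interior H ⊆ interior H for t > 0
  have hIntSmul : ∀ t : ℝ, 0 < t → ∀ x ∈ interior H, t • x ∈ interior H := by
    intro t ht x hx
    have hopen : IsOpen ((t • ·) '' interior H) :=
      (isOpenMap_smul₀ (ne_of_gt ht)) _ isOpen_interior
    have hsub : (t • ·) '' interior H ⊆ H := by
      rintro _ ⟨z, hz, rfl⟩
      exact hHcone z (interior_subset hz) t ht.le
    exact interior_maximal hsub hopen ⟨x, hx, rfl⟩
  refine ⟨?_, ?_, ?_⟩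
  · -- convexity
    intro p hp q hq a b ha hb hab
    simp only [Set.mem_setOf_eq] at hp hq ⊢
    have := hHconv hp hq ha hb hab
    have heq : a • (p.1 + p.2 • h) + b • (q.1 + q.2 • h)
        = (a • p + b • q).1 + (a • p + b • q).2 • h := by
      simp [Prod.smul_fst, Prod.smul_snd, smul_add, smul_smul]
      module
    rwa [heq] at this
  · -- cone
    intro p hp t ht
    simp only [Set.mem_setOf_eq] at hp ⊢
    have := hHcone _ hp t ht
    have heq : t • (p.1 + p.2 • h) = (t • p).1 + (t • p).2 • h := by
      simp [smul_add, smul_smul]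
    rwa [heq] at this
  · -- interior
    have hcont : Continuous (fun p : Y × ℝ => p.1 + p.2 • h) :=
      continuous_fst.add (continuous_snd.smul continuous_const)
    have hU : IsOpen {p : Y × ℝ | p.1 + p.2 • h ∈ interior H} :=
      isOpen_interior.preimage hcont
    have hUsub : {p : Y × ℝ | p.1 + p.2 • h ∈ interior H}
        ⊆ {p : Y × ℝ | p.1 + p.2 • h ∈ H} := fun p hp => interior_subset (s := H) hp
    rintro ⟨c, t⟩ ⟨⟨hc, ht⟩, hne⟩
    refine interior_maximal hUsub hU ?_
    simp only [Set.mem_setOf_eq]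
    simp only [Set.mem_Ici] at ht
    rcases eq_or_lt_of_le ht with rfl | htpos
    · have hcne : c ≠ 0 := by
        intro hc0; exact hne (by simp [hc0])
      have := hHdil ⟨hc, hcne⟩
      simpa using this
    · have hth : t • h ∈ interior H := hIntSmul t htpos h hh
      rcases eq_or_ne c 0 with rfl | hcne
      · simpa using hth
      · have hci : c ∈ interior H := hHdil ⟨hc, hcne⟩
        exact hIntAdd c hci (t • h) (interior_subset hth)
end
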